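/- Let I and J be proper ideals of 𝕂̃, with J a z-ideal. If J is contained in the radical of I, then J ⊆ I. -/

import Mathlib

noncomputable section

set_option maxHeartbeats 1000000
set_option synthInstance.maxHeartbeats 400000

open scoped Classical

/-- The index set `(0,1) ⊆ ℝ` of the nets. -/
abbrev Eps : Type := Set.Ioo (0:ℝ) 1

variable (K : Type) [RCLike K]

/-- A net `(x_ε)_{ε ∈ (0,1)}` is moderate if `|x_ε| ≤ ε^a` for some `a ∈ ℝ`,
for all sufficiently small `ε`. -/
def IsModerate (x : Eps → K) : Prop :=
  ∃ a : ℝ, ∃ ε₀ ∈ Set.Ioo (0:ℝ) 1, ∀ ε : Eps, (ε : ℝ) ≤ ε₀ → ‖x ε‖ ≤ (ε : ℝ) ^ a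

/-- A net `(x_ε)_{ε ∈ (0,1)}` is negligible if for every `a ∈ ℝ`, `|x_ε| ≤ ε^a`
for all sufficiently small `ε`. -/
def IsNegligible (x : Eps → K) : Prop :=
  ∀ a : ℝ, ∃ ε₀ ∈ Set.Ioo (0:ℝ) 1, ∀ ε : Eps, (ε : ℝ) ≤ ε₀ → ‖x ε‖ ≤ (ε : ℝ) ^ a

theorem rpow_two_bound {ε : ℝ} (h0 : 0 < ε) (h2 : ε ≤ 1/2) (a b : ℝ) :
    ε ^ a + ε ^ b ≤ ε ^ (min a b - 1) := by
  have h1 : ε ≤ 1 := h2.trans (by norm_num)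
  have ha : ε ^ a ≤ ε ^ min a b :=
    Real.rpow_le_rpow_of_exponent_ge h0 h1 (min_le_left a b)
  have hb : ε ^ b ≤ ε ^ min a b :=
    Real.rpow_le_rpow_of_exponent_ge h0 h1 (min_le_right a b)
  have key : 2 * ε ^ min a b ≤ ε ^ (min a b - 1) := by
    rw [Real.rpow_sub h0, Real.rpow_one, le_div_iff₀ h0]
    have hx : (0:ℝ) ≤ ε ^ min a b := (Real.rpow_pos_of_pos h0 _).le
    calc 2 * ε ^ min a b * ε ≤ 2 * ε ^ min a b * (1/2) := by
          apply mul_le_mul_of_nonneg_left h2 (by positivity)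
      _ = ε ^ min a b := by ring
  calc ε ^ a + ε ^ b ≤ 2 * ε ^ min a b := by linarith
    _ ≤ ε ^ (min a b - 1) := key

/-- The ring of moderate nets, as a subring of `K^{(0,1)}`. -/
def Moderate : Subring (Eps → K) where
  carrier := {x | IsModerate K x}
  zero_mem' := by
    refine ⟨0, 1/2, by constructor <;> norm_num, fun ε _ => ?_⟩
    simp [Real.rpow_zero]
  one_mem' := by
    refine ⟨0, 1/2, by constructor <;> norm_num, fun ε _ => ?_⟩
    simp [Real.rpow_zero]
  add_mem' := by
    rintro x y ⟨a, ε₀, h₀, ha⟩ ⟨b, ε₁, h₁, hb⟩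
    refine ⟨min a b - 1, min (min ε₀ ε₁) (1/2), ⟨lt_min (lt_min h₀.1 h₁.1) (by norm_num), ?_⟩,
      fun ε hε => ?_⟩
    · calc min (min ε₀ ε₁) (1/2) ≤ 1/2 := min_le_right _ _
        _ < 1 := by norm_num
    · have hε₀ : (ε:ℝ) ≤ ε₀ := le_trans hε (le_trans (min_le_left _ _) (min_le_left _ _))
      have hε₁ : (ε:ℝ) ≤ ε₁ := le_trans hε (le_trans (min_le_left _ _) (min_le_right _ _))
      have hε2 : (ε:ℝ) ≤ 1/2 := le_trans hε (min_le_right _ _)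
      calc ‖(x + y) ε‖ ≤ ‖x ε‖ + ‖y ε‖ := norm_add_le _ _
        _ ≤ (ε:ℝ) ^ a + (ε:ℝ) ^ b := add_le_add (ha ε hε₀) (hb ε hε₁)
        _ ≤ (ε:ℝ) ^ (min a b - 1) := rpow_two_bound ε.2.1 hε2 a b
  neg_mem' := by
    rintro x ⟨a, ε₀, h₀, ha⟩
    exact ⟨a, ε₀, h₀, fun ε hε => by simpa using ha ε hε⟩
  mul_mem' := by
    rintro x y ⟨a, ε₀, h₀, ha⟩ ⟨b, ε₁, h₁, hb⟩
    refine ⟨a + b, min ε₀ ε₁, ⟨lt_min h₀.1 h₁.1, lt_of_le_of_lt (min_le_left _ _) h₀.2⟩,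
      fun ε hε => ?_⟩
    have hε₀ : (ε:ℝ) ≤ ε₀ := le_trans hε (min_le_left _ _)
    have hε₁ : (ε:ℝ) ≤ ε₁ := le_trans hε (min_le_right _ _)
    calc ‖(x * y) ε‖ = ‖x ε‖ * ‖y ε‖ := norm_mul _ _
      _ ≤ (ε:ℝ) ^ a * (ε:ℝ) ^ b :=
        mul_le_mul (ha ε hε₀) (hb ε hε₁) (norm_nonneg _) (Real.rpow_pos_of_pos ε.2.1 _).le
      _ = (ε:ℝ) ^ (a + b) := (Real.rpow_add ε.2.1 _ _).symm

theorem mem_moderate {f : Eps → K} (h : IsModerate K f) : f ∈ Moderate K := h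

/-- The ideal of negligible nets in the ring of moderate nets. -/
def Negligible : Ideal (Moderate K) where
  carrier := {x | IsNegligible K (x : Eps → K)}
  zero_mem' := by
    intro a
    refine ⟨1/2, by constructor <;> norm_num, fun ε _ => ?_⟩
    have : (0:ℝ) ≤ (ε:ℝ) ^ a := (Real.rpow_pos_of_pos ε.2.1 _).le
    simpa using this
  add_mem' := by
    intro x y hx hy a
    obtain ⟨ε₀, h₀, ha⟩ := hx (a + 1)
    obtain ⟨ε₁, h₁, hb⟩ := hy (a + 1)
    refine ⟨min (min ε₀ ε₁) (1/2), ⟨lt_min (lt_min h₀.1 h₁.1) (by norm_num), ?_⟩, fun ε hε => ?_⟩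
    · calc min (min ε₀ ε₁) (1/2) ≤ 1/2 := min_le_right _ _
        _ < 1 := by norm_num
    · have hε₀ : (ε:ℝ) ≤ ε₀ := le_trans hε (le_trans (min_le_left _ _) (min_le_left _ _))
      have hε₁ : (ε:ℝ) ≤ ε₁ := le_trans hε (le_trans (min_le_left _ _) (min_le_right _ _))
      have hε2 : (ε:ℝ) ≤ 1/2 := le_trans hε (min_le_right _ _)
      have hbd := rpow_two_bound (ε := (ε:ℝ)) ε.2.1 hε2 (a+1) (a+1)
      simp only [min_self, add_sub_cancel_right] at hbd
      calc ‖((x + y : Moderate K) : Eps → K) ε‖ ≤ ‖(x : Eps → K) ε‖ + ‖(y : Eps → K) ε‖ := by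
            push_cast
            exact norm_add_le _ _
        _ ≤ (ε:ℝ) ^ (a+1) + (ε:ℝ) ^ (a+1) := add_le_add (ha ε hε₀) (hb ε hε₁)
        _ ≤ (ε:ℝ) ^ a := hbd
  smul_mem' := by
    intro c x hx
    show IsNegligible K ((c * x : Moderate K) : Eps → K)
    intro a
    obtain ⟨b, ε₀, h₀, hc⟩ := c.property
    obtain ⟨ε₁, h₁, hxa⟩ := hx (a - b)
    refine ⟨min ε₀ ε₁, ⟨lt_min h₀.1 h₁.1, lt_of_le_of_lt (min_le_left _ _) h₀.2⟩,
      fun ε hε => ?_⟩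
    have hε₀ : (ε:ℝ) ≤ ε₀ := le_trans hε (min_le_left _ _)
    have hε₁ : (ε:ℝ) ≤ ε₁ := le_trans hε (min_le_right _ _)
    calc ‖((c * x : Moderate K) : Eps → K) ε‖ = ‖(c : Eps → K) ε‖ * ‖(x : Eps → K) ε‖ := by
          push_cast
          exact norm_mul _ _
      _ ≤ (ε:ℝ) ^ b * (ε:ℝ) ^ (a - b) :=
        mul_le_mul (hc ε hε₀) (hxa ε hε₁) (norm_nonneg _) (Real.rpow_pos_of_pos ε.2.1 _).le
      _ = (ε:ℝ) ^ a := by rw [← Real.rpow_add ε.2.1]; ring_nf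

/-- The ring of Colombeau generalized numbers: the quotient of the ring of
moderate nets by the ideal of negligible nets. -/
abbrev CGen : Type := Moderate K ⧸ Negligible K

/-- The quotient map. -/
abbrev cmk : Moderate K →+* CGen K := Ideal.Quotient.mk (Negligible K)

/-- A canonical representative of a Colombeau generalized number. -/
def rep (x : CGen K) : Moderate K := (Ideal.Quotient.mk_surjective x).choose

theorem rep_spec (x : CGen K) : cmk K (rep K x) = x :=
  (Ideal.Quotient.mk_surjective x).choose_spec

theorem indicator_moderate (S : Set Eps) :
    IsModerate K (fun ε => if ε ∈ S then (1:K) else 0) := by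
  refine ⟨0, 1/2, by constructor <;> norm_num, fun ε _ => ?_⟩
  rw [Real.rpow_zero]
  by_cases h : ε ∈ S <;> simp [h]

/-- `e_S`: the generalized number given by the characteristic function of `S ⊆ (0,1)`. -/
def eS (S : Set Eps) : CGen K :=
  cmk K ⟨fun ε => if ε ∈ S then (1:K) else 0, mem_moderate K (indicator_moderate K S)⟩

theorem absNet_moderate (f : Moderate K) :
    IsModerate K (fun ε => ((‖(f : Eps → K) ε‖ : ℝ) : K)) := by
  obtain ⟨a, ε₀, h₀, h⟩ := f.property
  refine ⟨a, ε₀, h₀, fun ε hε => ?_⟩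
  simpa [RCLike.norm_ofReal, abs_norm] using h ε hε

/-- `|x|`: the class of the net `(|x_ε|)_ε` (for any representative of `x`). -/
def absC (x : CGen K) : CGen K :=
  cmk K ⟨_, mem_moderate K (absNet_moderate K (rep K x))⟩

theorem minNet_moderate (f g : Moderate K) :
    IsModerate K (fun ε => ((min ‖(f : Eps → K) ε‖ ‖(g : Eps → K) ε‖ : ℝ) : K)) := by
  obtain ⟨a, ε₀, h₀, h⟩ := f.property
  refine ⟨a, ε₀, h₀, fun ε hε => ?_⟩
  rw [RCLike.norm_ofReal, abs_of_nonneg (le_min (norm_nonneg _) (norm_nonneg _))]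
  exact le_trans (min_le_left _ _) (h ε hε)

/-- `|x| ∧ |y|`: the class of the pointwise minimum of `(|x_ε|)_ε` and `(|y_ε|)_ε`. -/
def infAbs (x y : CGen K) : CGen K :=
  cmk K ⟨_, mem_moderate K (minNet_moderate K (rep K x) (rep K y))⟩

theorem sqrtNet_moderate (f : Moderate K) :
    IsModerate K (fun ε => ((Real.sqrt ‖(f : Eps → K) ε‖ : ℝ) : K)) := by
  obtain ⟨a, ε₀, h₀, h⟩ := f.property
  refine ⟨a / 2, ε₀, h₀, fun ε hε => ?_⟩
  rw [RCLike.norm_ofReal, abs_of_nonneg (Real.sqrt_nonneg _)]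
  calc Real.sqrt ‖(f : Eps → K) ε‖ ≤ Real.sqrt ((ε:ℝ) ^ a) := Real.sqrt_le_sqrt (h ε hε)
    _ = (ε:ℝ) ^ (a / 2) := by
        rw [Real.sqrt_eq_rpow, ← Real.rpow_mul ε.2.1.le]
        ring_nf

/-- `√|x|`: the class of the net `(√|x_ε|)_ε` (for any representative of `x`). -/
def sqrtAbs (x : CGen K) : CGen K :=
  cmk K ⟨_, mem_moderate K (sqrtNet_moderate K (rep K x))⟩

/-- The annihilator `Ann(a) = {x : x·a = 0}` as an ideal. -/
def annIdeal (a : CGen K) : Ideal (CGen K) where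
  carrier := {x | x * a = 0}
  zero_mem' := by simp
  add_mem' := by
    intro x y hx hy
    show (x + y) * a = 0
    rw [add_mul, hx, hy, add_zero]
  smul_mem' := by
    intro c x hx
    show c * x * a = 0
    rw [mul_assoc, hx, mul_zero]

/-- The order relation on `𝕂̃`: `x ≤ y` iff there exist (real-valued) representatives
`(u_ε)_ε` of `x` and `(v_ε)_ε` of `y` with `u_ε ≤ v_ε` for all `ε`. -/
def leC (x y : CGen K) : Prop :=
  ∃ u v : Moderate K, cmk K u = x ∧ cmk K v = y ∧
    ∀ ε : Eps, ∃ r s : ℝ, (u : Eps → K) ε = (r : K) ∧ (v : Eps → K) ε = (s : K) ∧ r ≤ s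

/-- A z-ideal: if `b ∈ I` and `a` belongs to exactly the same maximal ideals as `b`,
then `a ∈ I`. -/
def IsZIdeal (I : Ideal (CGen K)) : Prop :=
  ∀ a b : CGen K, b ∈ I →
    (∀ M : Ideal (CGen K), M.IsMaximal → (a ∈ M ↔ b ∈ M)) → a ∈ I


/-- Two moderate nets that agree for all small `ε` define the same generalized number. -/
theorem cmk_eq_of_eventually (f g : Moderate K) (ε₂ : ℝ) (hε₂ : ε₂ ∈ Set.Ioo (0:ℝ) 1)
    (hfg : ∀ ε : Eps, (ε : ℝ) ≤ ε₂ → (f : Eps → K) ε = (g : Eps → K) ε) :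
    cmk K f = cmk K g := by
  rw [Ideal.Quotient.mk_eq_mk_iff_sub_mem]
  intro a
  refine ⟨ε₂, hε₂, fun ε hε => ?_⟩
  have hz : ((f - g : Moderate K) : Eps → K) ε = 0 := by
    push_cast
    simp [hfg ε hε]
  rw [hz, norm_zero]
  exact (Real.rpow_pos_of_pos ε.2.1 a).le

/-- The two complementary idempotents sum to `1`. -/
theorem eS_add_eS_compl (S : Set Eps) : eS K S + eS K Sᶜ = 1 := by
  have : (⟨_, mem_moderate K (indicator_moderate K S)⟩ +
      ⟨_, mem_moderate K (indicator_moderate K Sᶜ)⟩ : Moderate K) = 1 := by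
    ext ε
    by_cases h : ε ∈ S <;> simp [h]
  calc eS K S + eS K Sᶜ = cmk K _ := (map_add (cmk K) _ _).symm
    _ = 1 := by rw [this, map_one]

/-- The transfer lemma: if polynomial invertibility (on any set of `ε`'s) of `ξ`
implies that of `η`, then every maximal ideal containing the class of `η` contains
the class of `ξ`. -/
theorem transfer (M : Ideal (CGen K)) (hM : M.IsMaximal) (ξ η : Moderate K)
    (H : ∀ N : ℝ, ∃ N' : ℝ, ∀ ε : Eps,
      (ε : ℝ) ^ N ≤ ‖(ξ : Eps → K) ε‖ → (ε : ℝ) ^ N' ≤ ‖(η : Eps → K) ε‖)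
    (hy : cmk K η ∈ M) : cmk K ξ ∈ M := by
  by_contra hx
  obtain ⟨t, i, hiM, hti⟩ := hM.exists_inv hx
  set τ : Moderate K := rep K t with hτdef
  obtain ⟨a, ε₁, hε₁, hτ⟩ := τ.2
  set N : ℝ := max (1 - a) 1 with hNdef
  set S : Set Eps := {ε : Eps | (ε : ℝ) ^ N ≤ ‖(ξ : Eps → K) ε‖} with hSdef
  set ε₂ : ℝ := min ε₁ (1/2) with hε₂def
  have hε₂pos : 0 < ε₂ := lt_min hε₁.1 (by norm_num)
  have hε₂lt : ε₂ < 1 := lt_of_le_of_lt (min_le_right _ _) (by norm_num)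
  -- key bound off S
  have key : ∀ ε : Eps, ε ∉ S → (ε : ℝ) ≤ ε₂ →
      (1:ℝ)/2 ≤ ‖(1 : K) - (ξ : Eps → K) ε * (τ : Eps → K) ε‖ := by
    intro ε hεS hεε₂
    have hε1 : (ε : ℝ) ≤ ε₁ := le_trans hεε₂ (min_le_left _ _)
    have hεhalf : (ε : ℝ) ≤ 1/2 := le_trans hεε₂ (min_le_right _ _)
    have hξ : ‖(ξ : Eps → K) ε‖ ≤ (ε : ℝ) ^ N := le_of_not_ge hεS
    have hmul : ‖(ξ : Eps → K) ε * (τ : Eps → K) ε‖ ≤ (ε : ℝ) ^ (N + a) := by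
      rw [norm_mul, Real.rpow_add ε.2.1]
      exact mul_le_mul hξ (hτ ε hε1) (norm_nonneg _) (Real.rpow_pos_of_pos ε.2.1 _).le
    have hNa : (1:ℝ) ≤ N + a := by
      have : 1 - a ≤ N := le_max_left _ _
      linarith
    have hsmall : ‖(ξ : Eps → K) ε * (τ : Eps → K) ε‖ ≤ 1/2 := by
      calc ‖(ξ : Eps → K) ε * (τ : Eps → K) ε‖ ≤ (ε : ℝ) ^ (N + a) := hmul
        _ ≤ (ε : ℝ) ^ (1:ℝ) := Real.rpow_le_rpow_of_exponent_ge ε.2.1 ε.2.2.le hNa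
        _ = (ε : ℝ) := Real.rpow_one _
        _ ≤ 1/2 := hεhalf
    calc (1:ℝ)/2 = ‖(1:K)‖ - 1/2 := by rw [norm_one]; norm_num
      _ ≤ ‖(1:K)‖ - ‖(ξ : Eps → K) ε * (τ : Eps → K) ε‖ := by linarith
      _ ≤ ‖(1 : K) - (ξ : Eps → K) ε * (τ : Eps → K) ε‖ := norm_sub_norm_le _ _
  -- the net w
  set w : Eps → K := fun ε => if ε ∈ S ∨ ε₂ < (ε : ℝ) then 0
    else ((1 : K) - (ξ : Eps → K) ε * (τ : Eps → K) ε)⁻¹ with hwdef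
  have hwmod : IsModerate K w := by
    refine ⟨-1, ε₂, ⟨hε₂pos, hε₂lt⟩, fun ε hε => ?_⟩
    have h2 : (2:ℝ) ≤ (ε:ℝ) ^ (-1:ℝ) := by
      rw [Real.rpow_neg_one, ← one_div, le_div_iff₀ ε.2.1]
      have : (ε:ℝ) ≤ 1/2 := le_trans hε (min_le_right _ _)
      linarith
    by_cases hc : ε ∈ S ∨ ε₂ < (ε : ℝ)
    · simp only [hwdef, hc, if_pos]
      rw [norm_zero]
      exact (Real.rpow_pos_of_pos ε.2.1 _).le
    · push_neg at hc
      have hk := key ε hc.1 hε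
      simp only [hwdef]
      rw [if_neg (not_or.mpr ⟨hc.1, not_lt.mpr hc.2⟩), norm_inv]
      have h12 : ‖(1 : K) - (ξ : Eps → K) ε * (τ : Eps → K) ε‖⁻¹ ≤ (1/2:ℝ)⁻¹ :=
        inv_anti₀ (by norm_num) hk
      calc ‖(1 : K) - (ξ : Eps → K) ε * (τ : Eps → K) ε‖⁻¹ ≤ (1/2:ℝ)⁻¹ := h12
        _ = 2 := by norm_num
        _ ≤ (ε:ℝ) ^ (-1:ℝ) := h2
  -- e_{Sᶜ} ∈ M
  have hiE : i = cmk K (1 - τ * ξ) := by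
    have ht : cmk K τ = t := rep_spec K t
    have : i = 1 - t * cmk K ξ := by linear_combination hti
    rw [this, ← ht, map_sub, map_one, map_mul]
  have hScM : eS K Sᶜ ∈ M := by
    have heq : cmk K (⟨w, hwmod⟩ * (1 - τ * ξ)) = eS K Sᶜ := by
      apply cmk_eq_of_eventually K _ _ ε₂ ⟨hε₂pos, hε₂lt⟩
      intro ε hε
      push_cast
      simp only [Pi.mul_apply, Pi.sub_apply, Pi.one_apply]
      by_cases hc : ε ∈ S
      · simp only [Set.mem_compl_iff, hc, not_true_eq_false, if_false, hwdef,
          if_pos (Or.inl hc), zero_mul]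
      · have hk := key ε hc hε
        have hne : (1 : K) - (ξ : Eps → K) ε * (τ : Eps → K) ε ≠ 0 := by
          intro h0
          rw [h0, norm_zero] at hk
          linarith
        have hcond : ¬ (ε ∈ S ∨ ε₂ < (ε : ℝ)) := not_or.mpr ⟨hc, not_lt.mpr hε⟩
        simp only [Set.mem_compl_iff, hc, not_false_eq_true, if_true]
        simp only [hwdef]
        rw [if_neg hcond, mul_comm ((τ : Eps → K) ε) ((ξ : Eps → K) ε),
          inv_mul_cancel₀ hne]
    rw [← heq, map_mul]
    rw [← hiE]
    exact M.mul_mem_left _ hiM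
  have hSM : eS K S ∉ M := by
    intro hmem
    have : (1 : CGen K) ∈ M := by
      rw [← eS_add_eS_compl K S]
      exact M.add_mem hmem hScM
    exact hM.ne_top (M.eq_top_iff_one.mpr this)
  -- now use H to contradict
  obtain ⟨N', hN'⟩ := H N
  set r : Eps → K := fun ε => if ε ∈ S then ((η : Eps → K) ε)⁻¹ else 0 with hrdef
  have hrmod : IsModerate K r := by
    refine ⟨-N', 1/2, by constructor <;> norm_num, fun ε _ => ?_⟩
    by_cases hc : ε ∈ S
    · have hη := hN' ε hc
      have hpos : (0:ℝ) < (ε:ℝ) ^ N' := Real.rpow_pos_of_pos ε.2.1 _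
      simp only [hrdef, if_pos hc, norm_inv]
      rw [Real.rpow_neg ε.2.1.le]
      exact inv_anti₀ hpos hη
    · simp only [hrdef, if_neg hc, norm_zero]
      exact (Real.rpow_pos_of_pos ε.2.1 _).le
  have hre : (⟨r, hrmod⟩ * η : Moderate K) =
      ⟨_, mem_moderate K (indicator_moderate K S)⟩ := by
    ext ε
    push_cast
    by_cases hc : ε ∈ S
    · have hη := hN' ε hc
      have hne : (η : Eps → K) ε ≠ 0 := by
        intro h0
        rw [h0, norm_zero] at hη
        exact absurd hη (not_le.mpr (Real.rpow_pos_of_pos ε.2.1 _))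
      simp [hrdef, hc, inv_mul_cancel₀ hne]
    · simp [hrdef, hc]
  have : eS K S ∈ M := by
    have : eS K S = cmk K (⟨r, hrmod⟩ : Moderate K) * cmk K η := by
      rw [← map_mul, hre]; rfl
    rw [this]
    exact M.mul_mem_left _ hy
  exact hSM this

/-- The truncated absolute-value net of a representative. -/
def unet (β : Moderate K) : Eps → ℝ := fun ε => min ‖(β : Eps → K) ε‖ 1

/-- The companion net `d_ε = exp(-2 √(log(1/u_ε) · log(1/ε)))`. -/
def dnet (β : Moderate K) : Eps → ℝ := fun ε =>
  if unet K β ε = 0 then 0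
  else Real.exp (-(2 * Real.sqrt ((-Real.log (unet K β ε)) * (-Real.log (ε : ℝ)))))

theorem unet_nonneg (β : Moderate K) (ε : Eps) : 0 ≤ unet K β ε :=
  le_min (norm_nonneg _) zero_le_one

theorem unet_le_one (β : Moderate K) (ε : Eps) : unet K β ε ≤ 1 := min_le_right _ _

theorem negLog_pos (ε : Eps) : 0 < -Real.log (ε : ℝ) := by
  have := Real.log_neg ε.2.1 ε.2.2
  linarith

theorem negLog_unet_nonneg (β : Moderate K) (ε : Eps) (h : unet K β ε ≠ 0) :
    0 ≤ -Real.log (unet K β ε) := by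
  have := Real.log_nonpos (unet_nonneg K β ε) (unet_le_one K β ε)
  linarith

theorem dnet_nonneg (β : Moderate K) (ε : Eps) : 0 ≤ dnet K β ε := by
  unfold dnet
  by_cases h : unet K β ε = 0
  · simp [h]
  · simp only [h, if_false]
    exact (Real.exp_pos _).le

theorem dnet_le_one (β : Moderate K) (ε : Eps) : dnet K β ε ≤ 1 := by
  unfold dnet
  by_cases h : unet K β ε = 0
  · simp [h]
  · simp only [h, if_false]
    rw [Real.exp_le_one_iff]
    have h1 : 0 ≤ Real.sqrt ((-Real.log (unet K β ε)) * (-Real.log (ε : ℝ))) :=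
      Real.sqrt_nonneg _
    linarith

/-- `‖β‖` polynomially large implies `d` polynomially large. -/
theorem dnet_F1 (β : Moderate K) (N : ℝ) (ε : Eps)
    (hβ : (ε : ℝ) ^ N ≤ ‖(β : Eps → K) ε‖) :
    (ε : ℝ) ^ (max N 0 + 1) ≤ dnet K β ε := by
  have he0 : (0:ℝ) < ε := ε.2.1
  have he1 : (ε:ℝ) < 1 := ε.2.2
  set L : ℝ := -Real.log (ε : ℝ) with hLdef
  have hL : 0 < L := negLog_pos ε
  set P : ℝ := max N 0 with hPdef
  have hP : 0 ≤ P := le_max_right _ _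
  have hu : (ε:ℝ) ^ P ≤ unet K β ε := by
    refine le_min (le_trans ?_ hβ) (Real.rpow_le_one he0.le he1.le hP)
    exact Real.rpow_le_rpow_of_exponent_ge he0 he1.le (le_max_left N 0)
  have hup : 0 < unet K β ε := lt_of_lt_of_le (Real.rpow_pos_of_pos he0 P) hu
  have hune : unet K β ε ≠ 0 := ne_of_gt hup
  have hlogu : -Real.log (unet K β ε) ≤ P * L := by
    have h1 : Real.log ((ε:ℝ) ^ P) ≤ Real.log (unet K β ε) :=
      Real.log_le_log (Real.rpow_pos_of_pos he0 P) hu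
    rw [Real.log_rpow he0] at h1
    have : P * Real.log (ε:ℝ) = -(P * L) := by rw [hLdef]; ring
    linarith [this ▸ h1]
  have hsq : Real.sqrt ((-Real.log (unet K β ε)) * L) ≤ Real.sqrt P * L := by
    have h1 : (-Real.log (unet K β ε)) * L ≤ (P * L) * L :=
      mul_le_mul_of_nonneg_right hlogu hL.le
    have h2 : Real.sqrt ((P * L) * L) = Real.sqrt P * L := by
      rw [mul_assoc, Real.sqrt_mul hP, Real.sqrt_mul_self hL.le]
    exact le_trans (Real.sqrt_le_sqrt h1) h2.le
  unfold dnet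
  rw [if_neg hune, Real.rpow_def_of_pos he0]
  apply Real.exp_le_exp.mpr
  have h2P : 2 * Real.sqrt P ≤ P + 1 := by
    nlinarith [sq_nonneg (Real.sqrt P - 1), Real.sq_sqrt hP]
  have hmul : 2 * Real.sqrt P * L ≤ (P + 1) * L := mul_le_mul_of_nonneg_right h2P hL.le
  have hle : Real.log (ε:ℝ) * (P + 1) = -((P+1) * L) := by rw [hLdef]; ring
  rw [hle]
  have : 2 * Real.sqrt ((-Real.log (unet K β ε)) * L) ≤ (P + 1) * L := by
    nlinarith [hsq]
  linarith

/-- `d` polynomially large implies `‖β‖` polynomially large. -/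
theorem dnet_F2 (β : Moderate K) (N : ℝ) (ε : Eps)
    (hd : (ε : ℝ) ^ N ≤ dnet K β ε) :
    (ε : ℝ) ^ ((max N 0) ^ 2) ≤ ‖(β : Eps → K) ε‖ := by
  have he0 : (0:ℝ) < ε := ε.2.1
  have he1 : (ε:ℝ) < 1 := ε.2.2
  set L : ℝ := -Real.log (ε : ℝ) with hLdef
  have hL : 0 < L := negLog_pos ε
  set P : ℝ := max N 0 with hPdef
  have hP : 0 ≤ P := le_max_right _ _
  have hune : unet K β ε ≠ 0 := by
    intro h0
    have : dnet K β ε = 0 := by unfold dnet; rw [if_pos h0]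
    rw [this] at hd
    exact absurd hd (not_le.mpr (Real.rpow_pos_of_pos he0 N))
  have hup : 0 < unet K β ε := lt_of_le_of_ne (unet_nonneg K β ε) (Ne.symm hune)
  set Lu : ℝ := -Real.log (unet K β ε) with hLudef
  have hLu : 0 ≤ Lu := negLog_unet_nonneg K β ε hune
  have hdval : dnet K β ε = Real.exp (-(2 * Real.sqrt (Lu * L))) := by
    unfold dnet; rw [if_neg hune]
  rw [hdval, Real.rpow_def_of_pos he0] at hd
  have h1 : Real.log (ε:ℝ) * N ≤ -(2 * Real.sqrt (Lu * L)) := Real.exp_le_exp.mp hd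
  have h2 : 2 * Real.sqrt (Lu * L) ≤ N * L := by
    have : Real.log (ε:ℝ) * N = -(N * L) := by rw [hLdef]; ring
    linarith [this ▸ h1]
  have h3 : 2 * Real.sqrt (Lu * L) ≤ P * L :=
    h2.trans (mul_le_mul_of_nonneg_right (le_max_left N 0) hL.le)
  have hXnn : 0 ≤ Lu * L := mul_nonneg hLu hL.le
  clear_value L P Lu
  have h4 : Lu * L ≤ (P * L / 2) * (P * L / 2) := by
    have hs := Real.sqrt_nonneg (Lu * L)
    have hss := Real.sq_sqrt hXnn
    have h3' : (2 * Real.sqrt (Lu * L)) * (2 * Real.sqrt (Lu * L)) ≤ (P * L) * (P * L) :=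
      mul_self_le_mul_self (by positivity) h3
    nlinarith [h3', hss]
  have h5 : Lu ≤ P ^ 2 * L := by
    have h6 : Lu * L ≤ (P ^ 2 * L) * L := by
      have hPL2 : 0 ≤ (P * L) * (P * L) :=
        mul_nonneg (mul_nonneg hP hL.le) (mul_nonneg hP hL.le)
      nlinarith [h4, hPL2]
    exact le_of_mul_le_mul_right h6 hL
  have h7 : (ε:ℝ) ^ (P ^ 2) ≤ unet K β ε := by
    rw [Real.rpow_def_of_pos he0, ← Real.exp_log hup]
    apply Real.exp_le_exp.mpr
    have : Real.log (ε:ℝ) * P ^ 2 = -(P ^ 2 * L) := by rw [hLdef]; ring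
    rw [this]
    have : Real.log (unet K β ε) = -Lu := by rw [hLudef]; ring
    rw [this]
    linarith
  exact le_trans h7 (min_le_left _ _)

/-- The AM–GM divisibility estimate: `u ≤ d^m · ε^{-m²}`. -/
theorem dnet_F3 (β : Moderate K) (m : ℕ) (hm : m ≠ 0) (ε : Eps) :
    unet K β ε ≤ dnet K β ε ^ m * (ε : ℝ) ^ (-((m:ℝ) ^ 2)) := by
  have he0 : (0:ℝ) < ε := ε.2.1
  by_cases hu0 : unet K β ε = 0
  · rw [hu0]
    have : dnet K β ε = 0 := by unfold dnet; rw [if_pos hu0]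
    rw [this, zero_pow hm, zero_mul]
  · have hup : 0 < unet K β ε := lt_of_le_of_ne (unet_nonneg K β ε) (Ne.symm hu0)
    set L : ℝ := -Real.log (ε : ℝ) with hLdef
    have hL : 0 < L := negLog_pos ε
    set Lu : ℝ := -Real.log (unet K β ε) with hLudef
    have hLu : 0 ≤ Lu := negLog_unet_nonneg K β ε hu0
    have hdval : dnet K β ε = Real.exp (-(2 * Real.sqrt (Lu * L))) := by
      unfold dnet; rw [if_neg hu0]
    rw [hdval, ← Real.exp_nat_mul, Real.rpow_def_of_pos he0, ← Real.exp_add,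
      ← Real.exp_log hup]
    apply Real.exp_le_exp.mpr
    have hlogu : Real.log (unet K β ε) = -Lu := by rw [hLudef]; ring
    have hloge : Real.log (ε:ℝ) * (-((m:ℝ) ^ 2)) = (m:ℝ)^2 * L := by rw [hLdef]; ring
    rw [hlogu, hloge]
    have hsplit : Real.sqrt (Lu * L) = Real.sqrt Lu * Real.sqrt L :=
      Real.sqrt_mul hLu L
    have h1 : 2 * (m:ℝ) * (Real.sqrt Lu * Real.sqrt L) ≤ Lu + (m:ℝ)^2 * L := by
      nlinarith [sq_nonneg (Real.sqrt Lu - (m:ℝ) * Real.sqrt L),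
        Real.sq_sqrt hLu, Real.sq_sqrt hL.le]
    rw [hsplit]
    nlinarith [h1]

/-- if `I`, `J` are proper ideals of `𝕂̃`, `J` a z-ideal contained
in the radical of `I`, then `J ⊆ I`. -/
theorem stmt9 (I J : Ideal (CGen K)) (hI : I ≠ ⊤) (hJ : J ≠ ⊤)
    (hz : IsZIdeal K J) (h : J ≤ I.radical) : J ≤ I := by
  intro b hbJ
  set β : Moderate K := rep K b with hβdef
  set dK : Eps → K := fun ε => ((dnet K β ε : ℝ) : K) with hdKdef
  have hdKnorm : ∀ ε : Eps, ‖dK ε‖ = dnet K β ε := by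
    intro ε
    simp only [hdKdef]
    rw [RCLike.norm_ofReal, abs_of_nonneg (dnet_nonneg K β ε)]
  have hdKmod : dK ∈ Moderate K := by
    apply mem_moderate
    refine ⟨0, 1/2, by constructor <;> norm_num, fun ε _ => ?_⟩
    rw [hdKnorm ε, Real.rpow_zero]
    exact dnet_le_one K β ε
  set D : CGen K := cmk K ⟨dK, hdKmod⟩ with hDdef
  -- `D` and `b` belong to the same maximal ideals
  have hsame : ∀ M : Ideal (CGen K), M.IsMaximal → (D ∈ M ↔ b ∈ M) := by
    intro M hM
    constructor
    · intro hD
      have hb' : cmk K β ∈ M := by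
        refine transfer K M hM β ⟨dK, hdKmod⟩ (fun N => ?_) hD
        refine ⟨max N 0 + 1, fun ε hε => ?_⟩
        have := dnet_F1 K β N ε hε
        calc (ε:ℝ) ^ (max N 0 + 1) ≤ dnet K β ε := this
          _ = ‖dK ε‖ := (hdKnorm ε).symm
      rw [hβdef, rep_spec K b] at hb'
      exact hb'
    · intro hb
      have hb' : cmk K β ∈ M := by rw [hβdef, rep_spec K b]; exact hb
      refine transfer K M hM ⟨dK, hdKmod⟩ β (fun N => ?_) hb'
      refine ⟨(max N 0) ^ 2, fun ε hε => ?_⟩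
      apply dnet_F2 K β N ε
      rw [← hdKnorm ε]
      exact hε
  have hDJ : D ∈ J := hz D b hbJ hsame
  obtain ⟨n, hn⟩ := h hDJ
  set m : ℕ := n + 1 with hmdef
  have hm0 : m ≠ 0 := Nat.succ_ne_zero n
  have hDmI : D ^ m ∈ I := by
    rw [hmdef, pow_succ]
    exact I.mul_mem_right D hn
  have hdpos : ∀ ε : Eps, unet K β ε ≠ 0 → 0 < dnet K β ε := by
    intro ε hne
    unfold dnet
    rw [if_neg hne]
    exact Real.exp_pos _
  -- the quotient net
  set hK : Eps → K := fun ε => if unet K β ε = 0 then 0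
    else ((unet K β ε / dnet K β ε ^ m : ℝ) : K) with hhKdef
  have hhmod : hK ∈ Moderate K := by
    apply mem_moderate
    refine ⟨-((m:ℝ) ^ 2), 1/2, by constructor <;> norm_num, fun ε _ => ?_⟩
    by_cases hu0 : unet K β ε = 0
    · simp only [hhKdef, if_pos hu0, norm_zero]
      exact (Real.rpow_pos_of_pos ε.2.1 _).le
    · have hd := hdpos ε hu0
      have hdm : (0:ℝ) < dnet K β ε ^ m := pow_pos hd m
      simp only [hhKdef, if_neg hu0]
      rw [RCLike.norm_ofReal, abs_of_nonneg (div_nonneg (unet_nonneg K β ε) hdm.le), div_le_iff₀ hdm]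
      calc unet K β ε ≤ dnet K β ε ^ m * (ε:ℝ) ^ (-((m:ℝ) ^ 2)) := dnet_F3 K β m hm0 ε
        _ = (ε:ℝ) ^ (-((m:ℝ) ^ 2)) * dnet K β ε ^ m := mul_comm _ _
  -- the truncated absolute value net
  set uK : Eps → K := fun ε => ((unet K β ε : ℝ) : K) with huKdef
  have humod : uK ∈ Moderate K := by
    apply mem_moderate
    refine ⟨0, 1/2, by constructor <;> norm_num, fun ε _ => ?_⟩
    simp only [huKdef]
    rw [RCLike.norm_ofReal, abs_of_nonneg (unet_nonneg K β ε), Real.rpow_zero]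
    exact unet_le_one K β ε
  have hfact : ((⟨dK, hdKmod⟩ : Moderate K) ^ m * ⟨hK, hhmod⟩ : Moderate K)
      = ⟨uK, humod⟩ := by
    ext ε
    push_cast
    simp only [Pi.mul_apply, Pi.pow_apply]
    by_cases hu0 : unet K β ε = 0
    · simp [hhKdef, huKdef, hu0]
    · have hd := hdpos ε hu0
      have hdm : (dnet K β ε) ^ m ≠ 0 := ne_of_gt (pow_pos hd m)
      simp only [hhKdef, if_neg hu0, huKdef, hdKdef]
      rw [← RCLike.ofReal_pow, ← RCLike.ofReal_mul]
      congr 1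
      field_simp
  have huI : cmk K (⟨uK, humod⟩ : Moderate K) ∈ I := by
    have heq : cmk K (⟨uK, humod⟩ : Moderate K) = D ^ m * cmk K ⟨hK, hhmod⟩ := by
      rw [← hfact, map_mul, map_pow]
    rw [heq]
    exact I.mul_mem_right _ hDmI
  -- the polar/unit part
  set pv : Eps → K := fun ε => if (β : Eps → K) ε = 0 then 0
    else (β : Eps → K) ε / ((unet K β ε : ℝ) : K) with hpvdef
  obtain ⟨a, ε₀, hε₀, hβa⟩ := β.2
  have hpvmod : pv ∈ Moderate K := by
    apply mem_moderate
    refine ⟨min a 0, ε₀, hε₀, fun ε hε => ?_⟩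
    by_cases h0 : (β : Eps → K) ε = 0
    · simp only [hpvdef, if_pos h0, norm_zero]
      exact (Real.rpow_pos_of_pos ε.2.1 _).le
    · have hβn : 0 < ‖(β : Eps → K) ε‖ := norm_pos_iff.mpr h0
      have hu_pos : 0 < unet K β ε := lt_min hβn one_pos
      simp only [hpvdef, if_neg h0]
      rw [norm_div, RCLike.norm_ofReal, abs_of_pos hu_pos]
      have hcase : ‖(β : Eps → K) ε‖ / unet K β ε ≤ max 1 ‖(β : Eps → K) ε‖ := by
        rcases le_total ‖(β : Eps → K) ε‖ 1 with hle | hle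
        · rw [show unet K β ε = ‖(β : Eps → K) ε‖ from min_eq_left hle,
            div_self (ne_of_gt hβn)]
          exact le_max_left _ _
        · rw [show unet K β ε = 1 from min_eq_right hle, div_one]
          exact le_max_right _ _
      refine hcase.trans (max_le ?_ ?_)
      · have := Real.rpow_le_rpow_of_exponent_ge ε.2.1 ε.2.2.le (min_le_right a 0)
        rw [Real.rpow_zero] at this
        exact this
      · exact (hβa ε hε).trans
          (Real.rpow_le_rpow_of_exponent_ge ε.2.1 ε.2.2.le (min_le_left a 0))
  have hfact2 : ((⟨pv, hpvmod⟩ : Moderate K) * ⟨uK, humod⟩ : Moderate K) = β := by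
    ext ε
    push_cast
    simp only [Pi.mul_apply]
    by_cases h0 : (β : Eps → K) ε = 0
    · have hu0 : unet K β ε = 0 := by
        unfold unet
        rw [h0, norm_zero]
        simp
      simp [hpvdef, huKdef, h0, hu0]
    · have hβn : 0 < ‖(β : Eps → K) ε‖ := norm_pos_iff.mpr h0
      have hu_pos : 0 < unet K β ε := lt_min hβn one_pos
      have hune : ((unet K β ε : ℝ) : K) ≠ 0 :=
        RCLike.ofReal_ne_zero.mpr (ne_of_gt hu_pos)
      simp only [hpvdef, if_neg h0, huKdef]
      exact div_mul_cancel₀ _ hune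
  have hbform : b = cmk K (⟨pv, hpvmod⟩ : Moderate K) * cmk K ⟨uK, humod⟩ := by
    rw [← map_mul, hfact2, hβdef, rep_spec K b]
  rw [hbform]
  exact I.mul_mem_left _ huI


end
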